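/- Let $s>0$, $\alpha\in(0,1]$ with $s/\alpha>n$, let $Q$ be a cube in $\mathbb{R}^n$ with center $c$ and side length $\ell(Q)$, and let $Q^*$ be the cube with the same center and side length $10\sqrt{n}\,\ell(Q)$. Then for every $j\in\mathbb{Z}$, $\big\|\langle 2^j(\cdot-c)\rangle^{-s}\chi_{(Q^*)^c}\big\|_{L^{1/\alpha}(\mathbb{R}^n)}\approx 2^{-jn\alpha}\min\big(1,(2^j\ell(Q))^{-(s-\alpha n)}\big)$, with implicit constants independent of $j$, $c$, and $\ell(Q)$. -/
import Mathlib


open MeasureTheory Real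

/-- The axis-parallel cube in `ℝⁿ` with center `c` and side length `l`. -/
def cube (n : ℕ) (c : EuclideanSpace ℝ (Fin n)) (l : ℝ) : Set (EuclideanSpace ℝ (Fin n)) :=
  {y | ∀ i, |y i - c i| ≤ l / 2}

/-- `⟨x⟩ = (1 + 4π²|x|²)^{1/2}`. -/
noncomputable def jpBracket (n : ℕ) (x : EuclideanSpace ℝ (Fin n)) : ℝ :=
  Real.sqrt (1 + 4 * π ^ 2 * ‖x‖ ^ 2)

section Aux

open Metric Set

variable {n : ℕ}

private lemma wnoc_abs_apply_le_norm (x : EuclideanSpace ℝ (Fin n)) (i : Fin n) :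
    |x i| ≤ ‖x‖ := by
  rw [EuclideanSpace.norm_eq, ← Real.sqrt_sq_eq_abs]
  apply Real.sqrt_le_sqrt
  have : x i ^ 2 = ‖x i‖ ^ 2 := by simp [Real.norm_eq_abs, sq_abs]
  rw [this]
  exact Finset.single_le_sum (f := fun j => ‖x j‖ ^ 2) (fun j _ => by positivity)
    (Finset.mem_univ i)

private lemma wnoc_norm_le_of_mem_cube {t : ℝ} (ht : 0 ≤ t) {x : EuclideanSpace ℝ (Fin n)}
    (hx : x ∈ cube n 0 t) : ‖x‖ ≤ Real.sqrt n * t / 2 := by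
  rw [EuclideanSpace.norm_eq]
  have h : ∀ i, ‖x i‖ ^ 2 ≤ (t / 2) ^ 2 := by
    intro i
    have := hx i
    simp only [PiLp.zero_apply, sub_zero] at this
    rw [Real.norm_eq_abs, sq_abs, ← sq_abs (x i)]
    apply pow_le_pow_left₀ (abs_nonneg _) this
  calc √(∑ i, ‖x i‖ ^ 2) ≤ √(n * (t / 2) ^ 2) := by
        apply Real.sqrt_le_sqrt
        calc (∑ i, ‖x i‖ ^ 2) ≤ ∑ _i : Fin n, (t / 2) ^ 2 :=
              Finset.sum_le_sum fun i _ => h i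
          _ = n * (t / 2) ^ 2 := by simp [mul_comm]
    _ = Real.sqrt n * t / 2 := by
        rw [Real.sqrt_mul (by positivity), Real.sqrt_sq (by positivity)]
        ring

private lemma wnoc_measurableSet_cube (c : EuclideanSpace ℝ (Fin n)) (l : ℝ) :
    MeasurableSet (cube n c l) := by
  have : cube n c l = ⋂ i, (fun y : EuclideanSpace ℝ (Fin n) => |y i - c i|) ⁻¹' Iic (l / 2) := by
    ext y; simp [cube]
  rw [this]
  refine MeasurableSet.iInter fun i => ?_
  have hm : Measurable fun y : EuclideanSpace ℝ (Fin n) => |y i - c i| :=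
    ((EuclideanSpace.proj (𝕜 := ℝ) i).continuous.measurable.sub measurable_const).abs
  exact hm measurableSet_Iic

private lemma wnoc_jpBracket_pos (x : EuclideanSpace ℝ (Fin n)) : 0 < jpBracket n x := by
  rw [jpBracket]; positivity

private lemma wnoc_jp_rpow_eq (σ : ℝ) (x : EuclideanSpace ℝ (Fin n)) :
    jpBracket n x ^ (-σ) = ((1 : ℝ) + ‖(2 * π) • x‖ ^ 2) ^ (-σ / 2) := by
  rw [jpBracket, Real.sqrt_eq_rpow, ← Real.rpow_mul (by positivity), norm_smul,
    Real.norm_eq_abs, abs_of_pos (by positivity), mul_pow]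
  ring_nf

private lemma wnoc_integrable_g {σ : ℝ} (hσ : (n : ℝ) < σ) :
    Integrable (fun x : EuclideanSpace ℝ (Fin n) => jpBracket n x ^ (-σ)) := by
  simp only [wnoc_jp_rpow_eq]
  have h : (Module.finrank ℝ (EuclideanSpace ℝ (Fin n)) : ℝ) < σ := by
    rwa [finrank_euclideanSpace_fin]
  exact (integrable_rpow_neg_one_add_norm_sq (μ := volume) h).comp_smul (by positivity)

private lemma wnoc_g_le_w {σ : ℝ} (hσ : 0 < σ) {x : EuclideanSpace ℝ (Fin n)} (hx : 0 < ‖x‖) :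
    jpBracket n x ^ (-σ) ≤ ‖x‖ ^ (-σ) := by
  have h1 : ‖x‖ ≤ jpBracket n x := by
    rw [jpBracket]
    conv_lhs => rw [← Real.sqrt_sq (norm_nonneg x)]
    apply Real.sqrt_le_sqrt
    have h9 : (9:ℝ) ≤ π ^ 2 := by nlinarith [Real.pi_gt_three]
    nlinarith [mul_le_mul_of_nonneg_right h9 (sq_nonneg ‖x‖), sq_nonneg ‖x‖]
  exact Real.rpow_le_rpow_of_nonpos hx h1 (by linarith)

private lemma wnoc_w_le_g {σ : ℝ} (hσ : 0 < σ) {x : EuclideanSpace ℝ (Fin n)} (hx : 1 ≤ ‖x‖) :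
    ((1 + 2 * π) * ‖x‖) ^ (-σ) ≤ jpBracket n x ^ (-σ) := by
  have h1 : jpBracket n x ≤ (1 + 2 * π) * ‖x‖ := by
    rw [jpBracket]
    conv_rhs => rw [← Real.sqrt_sq (show (0:ℝ) ≤ (1 + 2 * π) * ‖x‖ by positivity)]
    apply Real.sqrt_le_sqrt
    have h1 : (1:ℝ) ≤ ‖x‖ ^ 2 := by nlinarith
    nlinarith [Real.pi_gt_three, sq_nonneg ‖x‖, Real.pi_pos]
  exact Real.rpow_le_rpow_of_nonpos (wnoc_jpBracket_pos x) h1 (by linarith)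

private lemma wnoc_integrableOn_w_one {σ : ℝ} (hσ : (n : ℝ) < σ) :
    IntegrableOn (fun x : EuclideanSpace ℝ (Fin n) => ‖x‖ ^ (-σ)) (closedBall 0 1)ᶜ := by
  have hσ0 : 0 < σ := lt_of_le_of_lt (Nat.cast_nonneg n) hσ
  have h : (Module.finrank ℝ (EuclideanSpace ℝ (Fin n)) : ℝ) < σ := by
    rwa [finrank_euclideanSpace_fin]
  have hint := ((integrable_one_add_norm (μ := volume) h).const_mul ((2:ℝ) ^ σ)).integrableOn
    (s := (closedBall (0 : EuclideanSpace ℝ (Fin n)) 1)ᶜ)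
  refine hint.mono' ?_ ?_
  · exact Measurable.aestronglyMeasurable (by fun_prop)
  · rw [ae_restrict_iff' (measurableSet_closedBall.compl)]
    refine Filter.Eventually.of_forall fun x hx => ?_
    rw [mem_compl_iff, mem_closedBall_zero_iff, not_le] at hx
    have hx0 : 0 < ‖x‖ := lt_trans one_pos hx
    rw [Real.norm_eq_abs, abs_of_nonneg (Real.rpow_nonneg (norm_nonneg x) _)]
    have h2 : (2 * ‖x‖) ^ (-σ) ≤ (1 + ‖x‖) ^ (-σ) :=
      Real.rpow_le_rpow_of_nonpos (by positivity) (by linarith) (by linarith)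
    have h3 : (2 * ‖x‖) ^ (-σ) = (2:ℝ) ^ (-σ) * ‖x‖ ^ (-σ) :=
      Real.mul_rpow zero_le_two (norm_nonneg x)
    have h4 : (2:ℝ) ^ σ * ((2:ℝ) ^ (-σ)) = 1 := by
      rw [← Real.rpow_add zero_lt_two]; simp
    calc ‖x‖ ^ (-σ) = (2:ℝ) ^ σ * ((2:ℝ) ^ (-σ) * ‖x‖ ^ (-σ)) := by
          rw [← mul_assoc, h4, one_mul]
      _ = (2:ℝ) ^ σ * (2 * ‖x‖) ^ (-σ) := by rw [h3]
      _ ≤ (2:ℝ) ^ σ * (1 + ‖x‖) ^ (-σ) := by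
          apply mul_le_mul_of_nonneg_left h2 (by positivity)

private lemma wnoc_indicator_scale {σ m : ℝ} (hm : 0 < m) (x : EuclideanSpace ℝ (Fin n)) :
    ((closedBall (0 : EuclideanSpace ℝ (Fin n)) 1)ᶜ).indicator
        (fun u => ‖u‖ ^ (-σ)) (m⁻¹ • x) =
      m ^ σ * ((closedBall (0 : EuclideanSpace ℝ (Fin n)) m)ᶜ).indicator
        (fun u => ‖u‖ ^ (-σ)) x := by
  have hinv : 0 < m⁻¹ := inv_pos.mpr hm
  have hmem : m⁻¹ • x ∈ (closedBall (0 : EuclideanSpace ℝ (Fin n)) 1)ᶜ ↔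
      x ∈ (closedBall (0 : EuclideanSpace ℝ (Fin n)) m)ᶜ := by
    simp only [mem_compl_iff, mem_closedBall_zero_iff, norm_smul, Real.norm_eq_abs,
      abs_of_pos hinv, not_le]
    constructor
    · intro h
      calc m = m * 1 := (mul_one m).symm
        _ < m * (m⁻¹ * ‖x‖) := (mul_lt_mul_iff_right₀ hm).mpr h
        _ = ‖x‖ := by field_simp
    · intro h
      calc (1:ℝ) = m⁻¹ * m := by field_simp
        _ < m⁻¹ * ‖x‖ := (mul_lt_mul_iff_right₀ hinv).mpr h
  by_cases hx : x ∈ (closedBall (0 : EuclideanSpace ℝ (Fin n)) m)ᶜ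
  · rw [Set.indicator_of_mem (hmem.mpr hx), Set.indicator_of_mem hx, norm_smul,
      Real.norm_eq_abs, abs_of_pos hinv, Real.mul_rpow hinv.le (norm_nonneg x),
      Real.inv_rpow hm.le, Real.rpow_neg hm.le, inv_inv]
  · rw [Set.indicator_of_notMem (fun h => hx (hmem.mp h)), Set.indicator_of_notMem hx,
      mul_zero]

private lemma wnoc_tail_scale (σ : ℝ) {m : ℝ} (hm : 0 < m) :
    ∫ x in (closedBall (0 : EuclideanSpace ℝ (Fin n)) m)ᶜ, ‖x‖ ^ (-σ) =
      m ^ ((n : ℝ) - σ) *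
        ∫ x in (closedBall (0 : EuclideanSpace ℝ (Fin n)) 1)ᶜ, ‖x‖ ^ (-σ) := by
  have h1 : ∫ x, ((closedBall (0 : EuclideanSpace ℝ (Fin n)) 1)ᶜ).indicator
      (fun u => ‖u‖ ^ (-σ)) (m⁻¹ • x) =
      m ^ σ * ∫ x, ((closedBall (0 : EuclideanSpace ℝ (Fin n)) m)ᶜ).indicator
        (fun u => ‖u‖ ^ (-σ)) x := by
    simp_rw [wnoc_indicator_scale hm, ← smul_eq_mul]
    exact integral_smul _ _
  rw [Measure.integral_comp_inv_smul volume
    (((closedBall (0 : EuclideanSpace ℝ (Fin n)) 1)ᶜ).indicator (fun u => ‖u‖ ^ (-σ))) m] at h1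
  rw [finrank_euclideanSpace_fin, abs_of_pos (pow_pos hm n), smul_eq_mul] at h1
  rw [← integral_indicator measurableSet_closedBall.compl,
    ← integral_indicator measurableSet_closedBall.compl]
  have hmσ : (0:ℝ) < m ^ σ := Real.rpow_pos_of_pos hm σ
  have hnn : m ^ n = m ^ ((n : ℝ)) := (Real.rpow_natCast m n).symm
  rw [hnn] at h1
  have h2 : (m ^ σ)⁻¹ * (m ^ ((n:ℝ)) *
      ∫ x, ((closedBall (0 : EuclideanSpace ℝ (Fin n)) 1)ᶜ).indicator
        (fun u => ‖u‖ ^ (-σ)) x) =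
      ∫ x, ((closedBall (0 : EuclideanSpace ℝ (Fin n)) m)ᶜ).indicator
        (fun u => ‖u‖ ^ (-σ)) x := by
    rw [h1, ← mul_assoc, inv_mul_cancel₀ hmσ.ne', one_mul]
  rw [← h2, Real.rpow_sub hm]
  ring

private lemma wnoc_integrableOn_w {σ : ℝ} (hσ : (n : ℝ) < σ) {m : ℝ} (hm : 0 < m) :
    IntegrableOn (fun x : EuclideanSpace ℝ (Fin n) => ‖x‖ ^ (-σ)) (closedBall 0 m)ᶜ := by
  have hbase := wnoc_integrableOn_w_one hσ
  rw [← integrable_indicator_iff measurableSet_closedBall.compl]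
  have h : ((closedBall (0 : EuclideanSpace ℝ (Fin n)) m)ᶜ).indicator
      (fun u => ‖u‖ ^ (-σ)) = fun x => (m ^ σ)⁻¹ *
        ((closedBall (0 : EuclideanSpace ℝ (Fin n)) 1)ᶜ).indicator
          (fun u => ‖u‖ ^ (-σ)) (m⁻¹ • x) := by
    funext x
    rw [wnoc_indicator_scale hm x, ← mul_assoc,
      inv_mul_cancel₀ (ne_of_gt (Real.rpow_pos_of_pos hm σ)), one_mul]
  rw [h]
  have hbase' : Integrable (((closedBall (0 : EuclideanSpace ℝ (Fin n)) 1)ᶜ).indicator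
      (fun u => ‖u‖ ^ (-σ))) :=
    (integrable_indicator_iff measurableSet_closedBall.compl).mpr hbase
  exact (hbase'.comp_smul (inv_ne_zero (ne_of_gt hm))).const_mul _

private lemma wnoc_T_pos (hn : 0 < n) {σ : ℝ}
    (hbase : IntegrableOn (fun x : EuclideanSpace ℝ (Fin n) => ‖x‖ ^ (-σ)) (closedBall 0 1)ᶜ) :
    0 < ∫ x in (closedBall (0 : EuclideanSpace ℝ (Fin n)) 1)ᶜ, ‖x‖ ^ (-σ) := by
  rw [setIntegral_pos_iff_support_of_nonneg_ae
    (Filter.Eventually.of_forall fun x => Real.rpow_nonneg (norm_nonneg x) _) hbase]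
  have hsub : (closedBall (0 : EuclideanSpace ℝ (Fin n)) 1)ᶜ ⊆
      Function.support (fun x : EuclideanSpace ℝ (Fin n) => ‖x‖ ^ (-σ)) ∩
        (closedBall (0 : EuclideanSpace ℝ (Fin n)) 1)ᶜ := by
    intro x hx
    refine ⟨?_, hx⟩
    rw [mem_compl_iff, mem_closedBall_zero_iff, not_le] at hx
    exact ne_of_gt (Real.rpow_pos_of_pos (lt_trans one_pos hx) _)
  refine lt_of_lt_of_le ?_ (measure_mono hsub)
  apply IsOpen.measure_pos volume (Metric.isClosed_closedBall.isOpen_compl)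
  refine ⟨EuclideanSpace.single ⟨0, hn⟩ (2:ℝ), ?_⟩
  rw [mem_compl_iff, mem_closedBall_zero_iff, not_le, EuclideanSpace.norm_single]
  norm_num

private lemma wnoc_min_one_mul_le {c x : ℝ} (hc : 0 ≤ c) (hx : 0 ≤ x) :
    min 1 c * min 1 x ≤ min 1 (c * x) := by
  apply le_min
  · calc min 1 c * min 1 x ≤ 1 * 1 :=
        mul_le_mul (min_le_left _ _) (min_le_left _ _) (le_min zero_le_one hx) zero_le_one
      _ = 1 := one_mul 1
  · exact mul_le_mul (min_le_right _ _) (min_le_right _ _) (le_min zero_le_one hx) hc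

private lemma wnoc_min_one_le_mul {c x : ℝ} (hx : 0 ≤ x) :
    min 1 (c * x) ≤ max 1 c * min 1 x := by
  rcases le_total x 1 with h2 | h2
  · rw [min_eq_right h2]
    exact (min_le_right _ _).trans (mul_le_mul_of_nonneg_right (le_max_right _ _) hx)
  · rw [min_eq_left h2]
    exact (min_le_left _ _).trans (by simp)

private lemma wnoc_min_le_max_mul_min {A B u : ℝ} (hu : 0 ≤ u) :
    min A (B * u) ≤ max A B * min 1 u := by
  rcases le_total 1 u with h | h
  · rw [min_eq_left h, mul_one]
    exact (min_le_left _ _).trans (le_max_left _ _)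
  · rw [min_eq_right h]
    exact (min_le_right _ _).trans (mul_le_mul_of_nonneg_right (le_max_right _ _) hu)

private lemma wnoc_max_rpow_nonpos {u e : ℝ} (hu : 0 < u) (he : e ≤ 0) :
    (max 1 u) ^ e = min 1 (u ^ e) := by
  rcases le_total 1 u with h | h
  · rw [max_eq_right h, min_eq_right (Real.rpow_le_one_of_one_le_of_nonpos h he)]
  · rw [max_eq_left h, Real.one_rpow,
      min_eq_left (Real.one_le_rpow_of_pos_of_le_one_of_nonpos hu h he)]

private lemma wnoc_min_one_rpow {M e : ℝ} (hM : 0 ≤ M) (he : 0 ≤ e) :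
    (min 1 M) ^ e = min 1 (M ^ e) := by
  rcases le_total M 1 with h | h
  · rw [min_eq_right h, min_eq_right (Real.rpow_le_one hM h he)]
  · rw [min_eq_left h, Real.one_rpow, min_eq_left (Real.one_le_rpow h he)]

private lemma wnoc_cube_preimage_sub (c : EuclideanSpace ℝ (Fin n)) (R : ℝ) :
    (cube n c R)ᶜ = (fun y : EuclideanSpace ℝ (Fin n) => y - c) ⁻¹' (cube n 0 R)ᶜ := by
  ext y
  simp only [mem_compl_iff, mem_preimage, cube, mem_setOf_eq, PiLp.sub_apply, PiLp.zero_apply,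
    sub_zero]

private lemma wnoc_cube_preimage_smul {a : ℝ} (ha : 0 < a) (R : ℝ) :
    (cube n 0 R)ᶜ = (fun z : EuclideanSpace ℝ (Fin n) => a • z) ⁻¹' (cube n 0 (a * R))ᶜ := by
  ext z
  simp only [mem_compl_iff, mem_preimage, cube, mem_setOf_eq, PiLp.smul_apply, PiLp.zero_apply,
    sub_zero, smul_eq_mul, abs_mul, abs_of_pos ha]
  constructor
  · intro h h'
    exact h fun i => by
      have := h' i
      rw [show a * R / 2 = a * (R / 2) by ring] at this
      exact le_of_mul_le_mul_left this ha
  · intro h h'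
    exact h fun i => by
      rw [show a * R / 2 = a * (R / 2) by ring]
      exact mul_le_mul_of_nonneg_left (h' i) ha.le

private lemma wnoc_cube_integral_eq (σ : ℝ) {a : ℝ} (ha : 0 < a)
    (c : EuclideanSpace ℝ (Fin n)) (R : ℝ) :
    ∫ y in (cube n c R)ᶜ, jpBracket n (a • (y - c)) ^ (-σ) =
      a ^ (-(n : ℝ)) * ∫ x in (cube n 0 (a * R))ᶜ, jpBracket n x ^ (-σ) := by
  rw [← integral_indicator (wnoc_measurableSet_cube c R).compl,
    ← integral_indicator (wnoc_measurableSet_cube 0 (a * R)).compl]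
  have step1 : ((cube n c R)ᶜ).indicator (fun y => jpBracket n (a • (y - c)) ^ (-σ)) =
      fun y => ((cube n 0 R)ᶜ).indicator (fun z => jpBracket n (a • z) ^ (-σ)) (y - c) := by
    funext y
    rw [wnoc_cube_preimage_sub c R]
    exact Set.indicator_comp_right (fun y : EuclideanSpace ℝ (Fin n) => y - c)
      (g := fun z => jpBracket n (a • z) ^ (-σ))
  rw [step1, integral_sub_right_eq_self
    (((cube n 0 R)ᶜ).indicator (fun z => jpBracket n (a • z) ^ (-σ))) c]
  have step2 : ((cube n 0 R)ᶜ).indicator (fun z => jpBracket n (a • z) ^ (-σ)) =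
      fun z => ((cube n 0 (a * R))ᶜ).indicator (fun x => jpBracket n x ^ (-σ)) (a • z) := by
    funext z
    rw [wnoc_cube_preimage_smul ha R]
    exact Set.indicator_comp_right (fun z : EuclideanSpace ℝ (Fin n) => a • z)
      (g := fun x => jpBracket n x ^ (-σ))
  rw [step2, Measure.integral_comp_smul volume
    (((cube n 0 (a * R))ᶜ).indicator (fun x => jpBracket n x ^ (-σ))) a,
    finrank_euclideanSpace_fin, smul_eq_mul]
  congr 1
  rw [abs_of_pos (by positivity), ← Real.rpow_natCast a n, ← Real.rpow_neg ha.le]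

/-- Upper bound on `F t = ∫_{(cube 0 t)ᶜ} ⟨x⟩^{-σ}`. -/
private lemma wnoc_F_upper (hn : 0 < n) {σ : ℝ} (hσ : (n : ℝ) < σ) {t : ℝ} (ht : 0 < t) :
    ∫ x in (cube n 0 t)ᶜ, jpBracket n x ^ (-σ) ≤
      max (∫ x : EuclideanSpace ℝ (Fin n), jpBracket n x ^ (-σ))
        ((2:ℝ) ^ (σ - (n:ℝ)) *
          ∫ x in (closedBall (0 : EuclideanSpace ℝ (Fin n)) 1)ᶜ, ‖x‖ ^ (-σ)) *
        min 1 (t ^ ((n : ℝ) - σ)) := by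
  have hσ0 : 0 < σ := lt_of_le_of_lt (Nat.cast_nonneg n) hσ
  have hg := wnoc_integrable_g hσ
  have hgnn : ∀ x : EuclideanSpace ℝ (Fin n), 0 ≤ jpBracket n x ^ (-σ) :=
    fun x => Real.rpow_nonneg (wnoc_jpBracket_pos x).le _
  set T := ∫ x in (closedBall (0 : EuclideanSpace ℝ (Fin n)) 1)ᶜ, ‖x‖ ^ (-σ) with hT_def
  set A := ∫ x : EuclideanSpace ℝ (Fin n), jpBracket n x ^ (-σ) with hA_def
  have hbound1 : ∫ x in (cube n 0 t)ᶜ, jpBracket n x ^ (-σ) ≤ A :=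
    setIntegral_le_integral hg (Filter.Eventually.of_forall hgnn)
  have hsub1 : (cube n 0 t)ᶜ ⊆ (closedBall (0 : EuclideanSpace ℝ (Fin n)) (t/2))ᶜ := by
    apply compl_subset_compl.mpr
    intro x hx i
    rw [mem_closedBall_zero_iff] at hx
    simp only [PiLp.zero_apply, sub_zero]
    exact (wnoc_abs_apply_le_norm x i).trans hx
  have hbound2 : ∫ x in (cube n 0 t)ᶜ, jpBracket n x ^ (-σ) ≤ (t/2) ^ ((n:ℝ) - σ) * T := by
    calc ∫ x in (cube n 0 t)ᶜ, jpBracket n x ^ (-σ)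
        ≤ ∫ x in (closedBall (0 : EuclideanSpace ℝ (Fin n)) (t/2))ᶜ, jpBracket n x ^ (-σ) :=
          setIntegral_mono_set hg.integrableOn
            (Filter.Eventually.of_forall fun x => hgnn x)
            (HasSubset.Subset.eventuallyLE hsub1)
      _ ≤ ∫ x in (closedBall (0 : EuclideanSpace ℝ (Fin n)) (t/2))ᶜ, ‖x‖ ^ (-σ) := by
          apply setIntegral_mono_on hg.integrableOn
            (wnoc_integrableOn_w hσ (by positivity)) measurableSet_closedBall.compl
          intro x hx
          rw [mem_compl_iff, mem_closedBall_zero_iff, not_le] at hx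
          exact wnoc_g_le_w hσ0 (lt_of_le_of_lt (by positivity) hx)
      _ = (t/2) ^ ((n:ℝ) - σ) * T := wnoc_tail_scale σ (by positivity)
  have hsplit : (t/2) ^ ((n:ℝ) - σ) = (2:ℝ) ^ (σ - (n:ℝ)) * t ^ ((n:ℝ) - σ) := by
    rw [div_eq_mul_inv, Real.mul_rpow ht.le (by norm_num),
      Real.inv_rpow zero_le_two, ← Real.rpow_neg zero_le_two, neg_sub]
    ring
  have := le_min hbound1 (by rw [hsplit] at hbound2; linarith [hbound2] :
    ∫ x in (cube n 0 t)ᶜ, jpBracket n x ^ (-σ) ≤ (2:ℝ) ^ (σ - (n:ℝ)) * T * t ^ ((n:ℝ) - σ))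
  calc ∫ x in (cube n 0 t)ᶜ, jpBracket n x ^ (-σ)
      ≤ min A ((2:ℝ) ^ (σ - (n:ℝ)) * T * t ^ ((n:ℝ) - σ)) := this
    _ ≤ max A ((2:ℝ) ^ (σ - (n:ℝ)) * T) * min 1 (t ^ ((n:ℝ) - σ)) := by
        exact wnoc_min_le_max_mul_min (Real.rpow_nonneg ht.le _)

/-- Lower bound on `F t`. -/
private lemma wnoc_F_lower (hn : 0 < n) {σ : ℝ} (hσ : (n : ℝ) < σ) {t : ℝ} (ht : 0 < t) :
    ((1 + 2*π) ^ (-σ) *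
        (∫ x in (closedBall (0 : EuclideanSpace ℝ (Fin n)) 1)ᶜ, ‖x‖ ^ (-σ)) *
        min 1 ((Real.sqrt n / 2) ^ ((n:ℝ) - σ))) * min 1 (t ^ ((n:ℝ) - σ)) ≤
      ∫ x in (cube n 0 t)ᶜ, jpBracket n x ^ (-σ) := by
  have hσ0 : 0 < σ := lt_of_le_of_lt (Nat.cast_nonneg n) hσ
  have hg := wnoc_integrable_g (n := n) hσ
  have hgnn : ∀ x : EuclideanSpace ℝ (Fin n), 0 ≤ jpBracket n x ^ (-σ) :=
    fun x => Real.rpow_nonneg (wnoc_jpBracket_pos x).le _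
  set T := ∫ x in (closedBall (0 : EuclideanSpace ℝ (Fin n)) 1)ᶜ, ‖x‖ ^ (-σ) with hT_def
  have hT0 : 0 ≤ T := setIntegral_nonneg measurableSet_closedBall.compl
    (fun x _ => Real.rpow_nonneg (norm_nonneg x) _)
  have hsn : 0 < Real.sqrt n := Real.sqrt_pos.mpr (by exact_mod_cast hn)
  set m := max 1 (Real.sqrt n * t / 2) with hm_def
  have hm1 : 1 ≤ m := le_max_left _ _
  have hm0 : 0 < m := lt_of_lt_of_le one_pos hm1
  have hsub : (closedBall (0 : EuclideanSpace ℝ (Fin n)) m)ᶜ ⊆ (cube n 0 t)ᶜ := by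
    apply compl_subset_compl.mpr
    intro x hx
    rw [mem_closedBall_zero_iff]
    exact (wnoc_norm_le_of_mem_cube ht.le hx).trans (le_max_right _ _)
  have h1 : ∫ x in (closedBall (0 : EuclideanSpace ℝ (Fin n)) m)ᶜ, jpBracket n x ^ (-σ) ≤
      ∫ x in (cube n 0 t)ᶜ, jpBracket n x ^ (-σ) :=
    setIntegral_mono_set hg.integrableOn
      (Filter.Eventually.of_forall fun x => hgnn x)
      (HasSubset.Subset.eventuallyLE hsub)
  have h2 : (1 + 2*π) ^ (-σ) * (m ^ ((n:ℝ) - σ) * T) ≤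
      ∫ x in (closedBall (0 : EuclideanSpace ℝ (Fin n)) m)ᶜ, jpBracket n x ^ (-σ) := by
    rw [← wnoc_tail_scale σ hm0, ← integral_const_mul]
    apply setIntegral_mono_on ((wnoc_integrableOn_w hσ hm0).const_mul _)
      hg.integrableOn measurableSet_closedBall.compl
    intro x hx
    rw [mem_compl_iff, mem_closedBall_zero_iff, not_le] at hx
    have hx1 : 1 ≤ ‖x‖ := le_of_lt (lt_of_le_of_lt hm1 hx)
    calc (1 + 2*π) ^ (-σ) * ‖x‖ ^ (-σ) = ((1 + 2*π) * ‖x‖) ^ (-σ) :=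
          (Real.mul_rpow (by positivity) (norm_nonneg x)).symm
      _ ≤ jpBracket n x ^ (-σ) := wnoc_w_le_g hσ0 hx1
  have hmβ : m ^ ((n:ℝ) - σ) = min 1 ((Real.sqrt n * t / 2) ^ ((n:ℝ) - σ)) :=
    wnoc_max_rpow_nonpos (by positivity) (by linarith)
  have hfact : (Real.sqrt n * t / 2) ^ ((n:ℝ) - σ) =
      (Real.sqrt n / 2) ^ ((n:ℝ) - σ) * t ^ ((n:ℝ) - σ) := by
    rw [show Real.sqrt n * t / 2 = (Real.sqrt n / 2) * t by ring,
      Real.mul_rpow (by positivity) ht.le]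
  have hmin : min 1 ((Real.sqrt n / 2) ^ ((n:ℝ) - σ)) * min 1 (t ^ ((n:ℝ) - σ)) ≤
      m ^ ((n:ℝ) - σ) := by
    rw [hmβ, hfact]
    exact wnoc_min_one_mul_le (Real.rpow_nonneg (by positivity) _)
      (Real.rpow_nonneg ht.le _)
  refine le_trans ?_ (le_trans h2 h1)
  calc (1 + 2*π) ^ (-σ) * T * min 1 ((Real.sqrt n / 2) ^ ((n:ℝ) - σ)) * min 1 (t ^ ((n:ℝ) - σ))
      = (1 + 2*π) ^ (-σ) * ((min 1 ((Real.sqrt n / 2) ^ ((n:ℝ) - σ)) *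
          min 1 (t ^ ((n:ℝ) - σ))) * T) := by ring
    _ ≤ (1 + 2*π) ^ (-σ) * (m ^ ((n:ℝ) - σ) * T) := by
        apply mul_le_mul_of_nonneg_left (mul_le_mul_of_nonneg_right hmin hT0)
          (Real.rpow_nonneg (by positivity) _)

end Aux

/-- Let `s > 0`, `α ∈ (0,1]` with `s/α > n`, `Q` a cube with center `c` and side `ℓ(Q)`, and
`Q*` its concentric dilate by `10√n`. Then for all `j ∈ ℤ`,
`‖⟨2^j(·-c)⟩^{-s} χ_{(Q*)ᶜ}‖_{L^{1/α}} ≈ 2^{-jnα} min(1, (2^j ℓ(Q))^{-(s-αn)})`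
with implicit constants independent of `j`, `c`, `ℓ(Q)`. -/
theorem weighted_norm_outside_cube (n : ℕ) (hn : 0 < n) (s α : ℝ) (hs : 0 < s)
    (hα0 : 0 < α) (hα1 : α ≤ 1) (hsα : (n : ℝ) < s / α) :
    ∃ C₁ > 0, ∃ C₂ > 0, ∀ (c : EuclideanSpace ℝ (Fin n)) (L : ℝ), 0 < L → ∀ j : ℤ,
      C₁ * (((2 : ℝ) ^ j) ^ (-((n : ℝ) * α)) *
          min 1 (((2 : ℝ) ^ j * L) ^ (-(s - α * n)))) ≤
        (∫ y in (cube n c (10 * Real.sqrt n * L))ᶜ,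
            (jpBracket n ((2 : ℝ) ^ j • (y - c))) ^ (-(s / α))) ^ α ∧
      (∫ y in (cube n c (10 * Real.sqrt n * L))ᶜ,
          (jpBracket n ((2 : ℝ) ^ j • (y - c))) ^ (-(s / α))) ^ α ≤
        C₂ * (((2 : ℝ) ^ j) ^ (-((n : ℝ) * α)) *
          min 1 (((2 : ℝ) ^ j * L) ^ (-(s - α * n)))) := by
  classical
  set σ := s / α with hσ_def
  have hσ0 : 0 < σ := div_pos hs hα0
  have hσn : (n : ℝ) < σ := hsα
  set β := (n : ℝ) - σ with hβ_def
  have hβ0 : β < 0 := by simp only [hβ_def]; linarith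
  have hβα : β * α = -(s - α * n) := by
    have : σ * α = s := by
      rw [hσ_def]; field_simp
    simp only [hβ_def]
    nlinarith [this]
  set T := ∫ x in (Metric.closedBall (0 : EuclideanSpace ℝ (Fin n)) 1)ᶜ, ‖x‖ ^ (-σ) with hT_def
  have hT : 0 < T := wnoc_T_pos hn (wnoc_integrableOn_w_one hσn)
  set A := ∫ x : EuclideanSpace ℝ (Fin n), jpBracket n x ^ (-σ) with hA_def
  set c₁ := (1 + 2*π) ^ (-σ) * T * min 1 ((Real.sqrt n / 2) ^ β) with hc₁_def
  set c₂ := max A ((2:ℝ) ^ (σ - (n:ℝ)) * T) with hc₂_def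
  have hsn : 0 < Real.sqrt n := Real.sqrt_pos.mpr (by exact_mod_cast hn)
  have hc₁ : 0 < c₁ := by
    apply mul_pos (mul_pos (Real.rpow_pos_of_pos (by positivity) _) hT)
    exact lt_min one_pos (Real.rpow_pos_of_pos (by positivity) _)
  have hc₂ : 0 < c₂ := lt_of_lt_of_le (mul_pos (Real.rpow_pos_of_pos two_pos _) hT)
    (le_max_right _ _)
  set d := 10 * Real.sqrt n with hd_def
  have hd : 0 < d := by positivity
  refine ⟨c₁ ^ α * min 1 (d ^ (β * α)), by positivity, c₂ ^ α * max 1 (d ^ (β * α)),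
    mul_pos (Real.rpow_pos_of_pos hc₂ _) (lt_of_lt_of_le one_pos (le_max_left _ _)), ?_⟩
  intro c L hL j
  set a := (2:ℝ) ^ j with ha_def
  have ha : 0 < a := by positivity
  set t := a * (d * L) with ht_def
  have ht : 0 < t := by positivity
  set u := a * L with hu_def
  have hu : 0 < u := by positivity
  have htdu : t = d * u := by rw [ht_def, hu_def]; ring
  -- the integral identity
  have hI : ∫ y in (cube n c (10 * Real.sqrt n * L))ᶜ,
      (jpBracket n ((2 : ℝ) ^ j • (y - c))) ^ (-(s / α)) =
      a ^ (-(n : ℝ)) * ∫ x in (cube n 0 t)ᶜ, jpBracket n x ^ (-σ) := by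
    have h10 : (10 : ℝ) * Real.sqrt n * L = d * L := by rw [hd_def]
    rw [h10, ← hσ_def, ← ha_def]
    exact wnoc_cube_integral_eq σ ha c (d * L)
  set F := ∫ x in (cube n 0 t)ᶜ, jpBracket n x ^ (-σ) with hF_def
  set M := min 1 (t ^ β) with hM_def
  have hM0 : 0 ≤ M := le_min zero_le_one (Real.rpow_nonneg ht.le _)
  have hFlow : c₁ * M ≤ F := wnoc_F_lower hn hσn ht
  have hFup : F ≤ c₂ * M := wnoc_F_upper hn hσn ht
  have hF0 : 0 ≤ F := le_trans (by positivity) hFlow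
  have han : 0 < a ^ (-(n:ℝ)) := Real.rpow_pos_of_pos ha _
  -- rpow algebra
  have hmin_split_low : min 1 (d ^ (β * α)) * min 1 (u ^ (β * α)) ≤ min 1 (t ^ (β * α)) := by
    rw [htdu, Real.mul_rpow hd.le hu.le]
    exact wnoc_min_one_mul_le (Real.rpow_nonneg hd.le _) (Real.rpow_nonneg hu.le _)
  have hmin_split_up : min 1 (t ^ (β * α)) ≤ max 1 (d ^ (β * α)) * min 1 (u ^ (β * α)) := by
    rw [htdu, Real.mul_rpow hd.le hu.le]
    exact wnoc_min_one_le_mul (Real.rpow_nonneg hu.le _)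
  have hMα : M ^ α = min 1 (t ^ (β * α)) := by
    rw [hM_def, wnoc_min_one_rpow (Real.rpow_nonneg ht.le _) hα0.le,
      ← Real.rpow_mul ht.le]
  have hprod : ∀ cc : ℝ, 0 ≤ cc → (a ^ (-(n:ℝ)) * (cc * M)) ^ α =
      a ^ (-((n:ℝ) * α)) * (cc ^ α * min 1 (t ^ (β * α))) := by
    intro cc hcc
    rw [Real.mul_rpow han.le (mul_nonneg hcc hM0), Real.mul_rpow hcc hM0,
      ← Real.rpow_mul ha.le, hMα, neg_mul]
  constructor
  · -- lower bound
    have hstep : a ^ (-(n:ℝ)) * (c₁ * M) ≤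
        ∫ y in (cube n c (10 * Real.sqrt n * L))ᶜ,
          (jpBracket n ((2 : ℝ) ^ j • (y - c))) ^ (-(s / α)) := by
      rw [hI]
      exact mul_le_mul_of_nonneg_left hFlow han.le
    have hr : (a ^ (-(n:ℝ)) * (c₁ * M)) ^ α ≤
        (∫ y in (cube n c (10 * Real.sqrt n * L))ᶜ,
          (jpBracket n ((2 : ℝ) ^ j • (y - c))) ^ (-(s / α))) ^ α :=
      Real.rpow_le_rpow (by positivity) hstep hα0.le
    refine le_trans ?_ hr
    rw [hprod c₁ hc₁.le, ← hβα]
    calc c₁ ^ α * min 1 (d ^ (β * α)) * (a ^ (-((n:ℝ) * α)) * min 1 (u ^ (β * α)))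
        = a ^ (-((n:ℝ) * α)) * (c₁ ^ α * (min 1 (d ^ (β * α)) * min 1 (u ^ (β * α)))) := by
          ring
      _ ≤ a ^ (-((n:ℝ) * α)) * (c₁ ^ α * min 1 (t ^ (β * α))) := by
          apply mul_le_mul_of_nonneg_left
            (mul_le_mul_of_nonneg_left hmin_split_low (by positivity))
            (by positivity)
  · -- upper bound
    have hstep : (∫ y in (cube n c (10 * Real.sqrt n * L))ᶜ,
        (jpBracket n ((2 : ℝ) ^ j • (y - c))) ^ (-(s / α))) ≤
        a ^ (-(n:ℝ)) * (c₂ * M) := by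
      rw [hI]
      exact mul_le_mul_of_nonneg_left hFup han.le
    have hr : (∫ y in (cube n c (10 * Real.sqrt n * L))ᶜ,
        (jpBracket n ((2 : ℝ) ^ j • (y - c))) ^ (-(s / α))) ^ α ≤
        (a ^ (-(n:ℝ)) * (c₂ * M)) ^ α := by
      apply Real.rpow_le_rpow ?_ hstep hα0.le
      rw [hI]
      positivity
    refine le_trans hr ?_
    rw [hprod c₂ hc₂.le, ← hβα]
    calc a ^ (-((n:ℝ) * α)) * (c₂ ^ α * min 1 (t ^ (β * α)))
        ≤ a ^ (-((n:ℝ) * α)) *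
            (c₂ ^ α * (max 1 (d ^ (β * α)) * min 1 (u ^ (β * α)))) := by
          apply mul_le_mul_of_nonneg_left
            (mul_le_mul_of_nonneg_left hmin_split_up (by positivity))
            (by positivity)
      _ = c₂ ^ α * max 1 (d ^ (β * α)) * (a ^ (-((n:ℝ) * α)) * min 1 (u ^ (β * α))) := by
          ring
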